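/- For every integer ℓ ≥ 1 there exist constants C > 0 and s₀ > 0 such that for all s ≥ s₀, | k_ℓ(s) − (e^s/(2 s^ℓ)) (1 − ℓ(ℓ−1)/(2s)) | ≤ C e^s s^{-ℓ - 2}; that is, k_ℓ(s) = (e^s/(2 s^ℓ))(1 − ℓ(ℓ−1)/(2s) + O(1/s²)) as s → ∞. -/

import Mathlib

open Real Set Filter
open scoped Nat Topology

noncomputable section

/-- The even-dimensional kernel `k_ℓ(s) = Σ_{j=0}^∞ s^{2j+1}/((2(j+ℓ))‼ (2j+1)‼)`. -/
def kEven (ℓ : ℕ) (s : ℝ) : ℝ :=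
  ∑' j : ℕ, s ^ (2 * j + 1) / (((2 * (j + ℓ))‼ : ℝ) * (((2 * j + 1)‼ : ℝ)))

namespace KEvenAux

open Finset Polynomial

/-- `uF ℓ m = (m+1)(m+3)⋯(m+2ℓ-1)` -/
def uF (ℓ m : ℕ) : ℝ := ∏ i ∈ Finset.range ℓ, ((m : ℝ) + (2 * i + 1))
/-- `vF ℓ m = (m+1)(m+2)⋯(m+ℓ)` -/
def vF (ℓ m : ℕ) : ℝ := ∏ i ∈ Finset.range ℓ, ((m : ℝ) + (i + 1))

lemma uF_pos (ℓ m : ℕ) : 0 < uF ℓ m := Finset.prod_pos fun i _ => by positivity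
lemma vF_pos (ℓ m : ℕ) : 0 < vF ℓ m := Finset.prod_pos fun i _ => by positivity

lemma pow_le_uF (ℓ m : ℕ) : ((m : ℝ) + 1) ^ ℓ ≤ uF ℓ m := by
  have h := Finset.prod_le_prod (s := Finset.range ℓ) (f := fun _ : ℕ => (m : ℝ) + 1)
    (g := fun i : ℕ => (m : ℝ) + (2 * i + 1)) (fun i _ => by positivity)
    (fun i _ => by push_cast; linarith)
  simpa [uF] using h

lemma pow_le_vF (ℓ m : ℕ) : ((m : ℝ) + 1) ^ ℓ ≤ vF ℓ m := by
  have h := Finset.prod_le_prod (s := Finset.range ℓ) (f := fun _ : ℕ => (m : ℝ) + 1)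
    (g := fun i : ℕ => (m : ℝ) + (i + 1)) (fun i _ => by positivity)
    (fun i _ => by push_cast; linarith)
  simpa [vF] using h

lemma vF_le (ℓ m : ℕ) : vF ℓ m ≤ ((ℓ : ℝ) * ((m : ℝ) + 1)) ^ ℓ := by
  have h := Finset.prod_le_prod (s := Finset.range ℓ)
    (f := fun i : ℕ => (m : ℝ) + (i + 1)) (g := fun _ : ℕ => (ℓ : ℝ) * ((m : ℝ) + 1))
    (fun i _ => by positivity) (fun i hi => ?_)
  · simpa [vF] using h
  · rw [Finset.mem_range] at hi
    have h1 : (i : ℝ) + 1 ≤ (ℓ : ℝ) := by exact_mod_cast hi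
    have h2 : (1 : ℝ) ≤ (ℓ : ℝ) := by
      have : (0 : ℝ) ≤ (i : ℝ) := Nat.cast_nonneg i
      linarith
    have h3 : (0 : ℝ) ≤ (m : ℝ) := Nat.cast_nonneg m
    nlinarith [mul_nonneg (sub_nonneg.2 h2) h3]

lemma factorial_eq (ℓ m : ℕ) : ((m + ℓ)! : ℝ) = (m ! : ℝ) * vF ℓ m := by
  induction ℓ with
  | zero => simp [vF]
  | succ n ih =>
      have : m + (n + 1) = (m + n) + 1 := by omega
      rw [this, Nat.factorial_succ, vF, Finset.prod_range_succ, ← vF]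
      push_cast
      rw [ih]
      ring

lemma dfac_eq (ℓ j : ℕ) :
    (2 * (j + ℓ))‼ * (2 * j + 1)‼ = (2 * j + 1)! * ∏ i ∈ Finset.range ℓ, (2 * j + 2 + 2 * i) := by
  induction ℓ with
  | zero =>
      rw [Finset.range_zero, Finset.prod_empty, mul_one, add_zero,
        Nat.factorial_eq_mul_doubleFactorial, mul_comm]
  | succ n ih =>
      have h2 : 2 * (j + (n + 1)) = 2 * (j + n) + 2 := by ring
      rw [h2, Nat.doubleFactorial_add_two, Finset.prod_range_succ, mul_assoc, ih]
      have : 2 * (j + n) + 2 = 2 * j + 2 + 2 * n := by ring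
      rw [this]; ring

lemma dfac_eq_real (ℓ j : ℕ) :
    ((2 * (j + ℓ))‼ : ℝ) * ((2 * j + 1)‼ : ℝ) = ((2 * j + 1)! : ℝ) * uF ℓ (2 * j + 1) := by
  have := dfac_eq ℓ j
  have h : ((2 * (j + ℓ))‼ * (2 * j + 1)‼ : ℕ) = ((2 * j + 1)! * ∏ i ∈ Finset.range ℓ, (2 * j + 2 + 2 * i) : ℕ) := this
  have := congrArg (fun n : ℕ => (n : ℝ)) h
  push_cast at this
  rw [this, uF]
  congr 1
  exact Finset.prod_congr rfl fun i _ => by push_cast; ring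

lemma gauss (ℓ : ℕ) : ∑ i ∈ Finset.range ℓ, (i : ℝ) = (ℓ : ℝ) * ((ℓ : ℝ) - 1) / 2 := by
  induction ℓ with
  | zero => simp
  | succ n ih => rw [Finset.sum_range_succ, ih]; push_cast; ring

lemma poly_bound (ℓ : ℕ) (hℓ : 1 ≤ ℓ) : ∃ D > (0:ℝ), ∀ m : ℕ,
    |1 / uF ℓ m - 1 / vF ℓ m + ((ℓ:ℝ) * ((ℓ:ℝ) - 1) / 2) / vF (ℓ+1) m|
      ≤ D / ((m:ℝ) + 1) ^ (ℓ + 2) := by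
  obtain ⟨n, rfl⟩ : ∃ n, ℓ = n + 1 := ⟨ℓ - 1, by omega⟩
  set L := n + 1 with hLdef
  set Q : ℝ := (L : ℝ) * ((L : ℝ) - 1) / 2 with hQ
  set U : ℝ[X] := ∏ i ∈ Finset.range L, (X + C (2 * (i:ℝ) + 1)) with hU
  set V : ℝ[X] := ∏ i ∈ Finset.range L, (X + C ((i:ℝ) + 1)) with hV
  set W : ℝ[X] := ∏ i ∈ Finset.range (L+1), (X + C ((i:ℝ) + 1)) with hW
  set P : ℝ[X] := W * V - W * U + C Q * (U * V) with hP
  have hUm : U.Monic := monic_prod_of_monic _ _ fun i _ => monic_X_add_C _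
  have hVm : V.Monic := monic_prod_of_monic _ _ fun i _ => monic_X_add_C _
  have hWm : W.Monic := monic_prod_of_monic _ _ fun i _ => monic_X_add_C _
  have hUd : U.natDegree = L := by
    rw [hU, natDegree_prod_of_monic _ _ fun i _ => monic_X_add_C _]
    simp only [natDegree_X_add_C, Finset.sum_const, Finset.card_range, smul_eq_mul, mul_one]
  have hVd : V.natDegree = L := by
    rw [hV, natDegree_prod_of_monic _ _ fun i _ => monic_X_add_C _]
    simp only [natDegree_X_add_C, Finset.sum_const, Finset.card_range, smul_eq_mul, mul_one]
  have hWd : W.natDegree = L + 1 := by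
    rw [hW, natDegree_prod_of_monic _ _ fun i _ => monic_X_add_C _]
    simp only [natDegree_X_add_C, Finset.sum_const, Finset.card_range, smul_eq_mul, mul_one]
  have hUn : U.nextCoeff = ∑ i ∈ Finset.range L, (2 * (i:ℝ) + 1) := by
    rw [hU, Monic.nextCoeff_prod _ _ fun i _ => monic_X_add_C _]
    simp only [nextCoeff_X_add_C]
  have hVn : V.nextCoeff = ∑ i ∈ Finset.range L, ((i:ℝ) + 1) := by
    rw [hV, Monic.nextCoeff_prod _ _ fun i _ => monic_X_add_C _]
    simp only [nextCoeff_X_add_C]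
  -- coefficient vanishing
  have hkey : ∀ k, 2 * L ≤ k → P.coeff k = 0 := by
    intro k hk
    have hWV : (W * V).Monic := hWm.mul hVm
    have hWU : (W * U).Monic := hWm.mul hUm
    have hUV : (U * V).Monic := hUm.mul hVm
    have hWVd : (W * V).natDegree = 2 * L + 1 := by
      rw [hWm.natDegree_mul hVm, hWd, hVd]; omega
    have hWUd : (W * U).natDegree = 2 * L + 1 := by
      rw [hWm.natDegree_mul hUm, hWd, hUd]; omega
    have hUVd : (U * V).natDegree = 2 * L := by
      rw [hUm.natDegree_mul hVm, hUd, hVd]; omega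
    rw [hP]
    simp only [coeff_add, coeff_sub, coeff_C_mul]
    rcases eq_or_lt_of_le hk with hk2 | hk2
    · -- k = 2L
      subst hk2
      have h1 : (W * V).coeff (2 * L) = W.nextCoeff + V.nextCoeff := by
        have : (W * V).coeff (2 * L) = (W * V).nextCoeff := by
          rw [nextCoeff_of_natDegree_pos (by omega), hWVd]
          norm_num
        rw [this, hWm.nextCoeff_mul hVm]
        
      have h2 : (W * U).coeff (2 * L) = W.nextCoeff + U.nextCoeff := by
        have : (W * U).coeff (2 * L) = (W * U).nextCoeff := by
          rw [nextCoeff_of_natDegree_pos (by omega), hWUd]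
          norm_num
        rw [this, hWm.nextCoeff_mul hUm]
      have h3 : (U * V).coeff (2 * L) = 1 := by
        have := hUV.coeff_natDegree
        rwa [hUVd] at this
      rw [h1, h2, h3, hUn, hVn]
      have hsum : ∑ i ∈ Finset.range L, ((i:ℝ) + 1) - ∑ i ∈ Finset.range L, (2 * (i:ℝ) + 1)
          = -Q := by
        rw [hQ, ← Finset.sum_sub_distrib, ← gauss L, ← Finset.sum_neg_distrib]
        exact Finset.sum_congr rfl fun i _ => by ring
      linear_combination hsum
    · -- k > 2L
      by_cases hk3 : k = 2 * L + 1
      · subst hk3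
        have h1 : (W * V).coeff (2 * L + 1) = 1 := by
          have := hWV.coeff_natDegree; rwa [hWVd] at this
        have h2 : (W * U).coeff (2 * L + 1) = 1 := by
          have := hWU.coeff_natDegree; rwa [hWUd] at this
        have h3 : (U * V).coeff (2 * L + 1) = 0 :=
          coeff_eq_zero_of_natDegree_lt (by omega)
        rw [h1, h2, h3]; ring
      · have h1 : (W * V).coeff k = 0 := coeff_eq_zero_of_natDegree_lt (by omega)
        have h2 : (W * U).coeff k = 0 := coeff_eq_zero_of_natDegree_lt (by omega)
        have h3 : (U * V).coeff k = 0 := coeff_eq_zero_of_natDegree_lt (by omega)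
        rw [h1, h2, h3]; ring
  -- degree bound
  have hPd : P.natDegree < 2 * L := by
    have : P.natDegree ≤ 2 * L - 1 :=
      natDegree_le_iff_coeff_eq_zero.mpr fun N hN => hkey N (by omega)
    omega
  set D : ℝ := (∑ k ∈ Finset.range (2 * L), |P.coeff k|) + 1 with hD
  have hDpos : 0 < D := by
    have : (0:ℝ) ≤ ∑ k ∈ Finset.range (2 * L), |P.coeff k| :=
      Finset.sum_nonneg fun k _ => abs_nonneg _
    linarith
  refine ⟨D, hDpos, fun m => ?_⟩
  have hx1 : (1:ℝ) ≤ (m:ℝ) + 1 := by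
    have : (0:ℝ) ≤ (m:ℝ) := Nat.cast_nonneg m; linarith
  have hx0 : (0:ℝ) ≤ (m:ℝ) := Nat.cast_nonneg m
  -- eval bound
  have heval : |P.eval (m:ℝ)| ≤ D * ((m:ℝ) + 1) ^ (2 * L - 1) := by
    rw [eval_eq_sum_range' hPd]
    calc |∑ k ∈ Finset.range (2 * L), P.coeff k * (m:ℝ) ^ k|
        ≤ ∑ k ∈ Finset.range (2 * L), |P.coeff k * (m:ℝ) ^ k| :=
          Finset.abs_sum_le_sum_abs _ _
      _ ≤ ∑ k ∈ Finset.range (2 * L), |P.coeff k| * ((m:ℝ) + 1) ^ (2 * L - 1) := by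
          refine Finset.sum_le_sum fun k hk => ?_
          rw [abs_mul, abs_pow, abs_of_nonneg hx0]
          refine mul_le_mul_of_nonneg_left ?_ (abs_nonneg _)
          calc (m:ℝ) ^ k ≤ ((m:ℝ) + 1) ^ k :=
                pow_le_pow_left₀ hx0 (by linarith) k
            _ ≤ ((m:ℝ) + 1) ^ (2 * L - 1) := by
                refine pow_le_pow_right₀ hx1 ?_
                rw [Finset.mem_range] at hk; omega
      _ = (∑ k ∈ Finset.range (2 * L), |P.coeff k|) * ((m:ℝ) + 1) ^ (2 * L - 1) := by
          rw [← Finset.sum_mul]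
      _ ≤ D * ((m:ℝ) + 1) ^ (2 * L - 1) := by
          refine mul_le_mul_of_nonneg_right ?_ (by positivity)
          rw [hD]; linarith
  -- eval values
  have hUe : U.eval (m:ℝ) = uF L m := by
    rw [hU, eval_prod, uF]; exact Finset.prod_congr rfl fun i _ => by simp
  have hVe : V.eval (m:ℝ) = vF L m := by
    rw [hV, eval_prod, vF]; exact Finset.prod_congr rfl fun i _ => by simp
  have hWe : W.eval (m:ℝ) = vF (L+1) m := by
    rw [hW, eval_prod, vF]; exact Finset.prod_congr rfl fun i _ => by simp
  have hu := uF_pos L m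
  have hv := vF_pos L m
  have hw := vF_pos (L+1) m
  have hPe : P.eval (m:ℝ) = vF (L+1) m * (vF L m) - vF (L+1) m * uF L m
      + Q * (uF L m * vF L m) := by
    rw [hP]; simp [hUe, hVe, hWe]
  -- the algebraic identity
  have hid : 1 / uF L m - 1 / vF L m + Q / vF (L+1) m
      = P.eval (m:ℝ) / (uF L m * vF L m * vF (L+1) m) := by
    rw [hPe]
    field_simp
  have huvw : (0:ℝ) < uF L m * vF L m * vF (L+1) m := mul_pos (mul_pos hu hv) hw
  rw [hid, abs_div, abs_of_pos huvw]
  rw [div_le_div_iff₀ huvw (by positivity)]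
  calc |P.eval (m:ℝ)| * ((m:ℝ) + 1) ^ (L + 2)
      ≤ (D * ((m:ℝ) + 1) ^ (2 * L - 1)) * ((m:ℝ) + 1) ^ (L + 2) := by
        exact mul_le_mul_of_nonneg_right heval (by positivity)
    _ = D * ((m:ℝ) + 1) ^ (3 * L + 1) := by
        rw [mul_assoc, ← pow_add]
        congr 2
        omega
    _ = D * (((m:ℝ) + 1) ^ L * ((m:ℝ) + 1) ^ L * ((m:ℝ) + 1) ^ (L + 1)) := by
        rw [← pow_add, ← pow_add]
        congr 2
        omega
    _ ≤ D * (uF L m * vF L m * vF (L+1) m) := by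
        refine mul_le_mul_of_nonneg_left ?_ (le_of_lt hDpos)
        have h1 := pow_le_uF L m
        have h2 := pow_le_vF L m
        have h3 := pow_le_vF (L+1) m
        have p1 : (0:ℝ) ≤ ((m:ℝ)+1) ^ L := by positivity
        have p2 : (0:ℝ) ≤ ((m:ℝ)+1) ^ (L+1) := by positivity
        calc ((m:ℝ) + 1) ^ L * ((m:ℝ) + 1) ^ L * ((m:ℝ) + 1) ^ (L + 1)
            ≤ uF L m * vF L m * (((m:ℝ) + 1) ^ (L + 1)) := by
              refine mul_le_mul_of_nonneg_right ?_ p2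
              exact mul_le_mul h1 h2 p1 (le_of_lt hu)
          _ ≤ uF L m * vF L m * vF (L+1) m := by
              refine mul_le_mul_of_nonneg_left h3 ?_
              positivity
  done

lemma exp_tsum (s : ℝ) : Real.exp s = ∑' n : ℕ, s ^ n / (n ! : ℝ) := by
  rw [Real.exp_eq_exp_ℝ, NormedSpace.exp_eq_tsum_div]

lemma summable_exp_ser (s : ℝ) : Summable (fun n : ℕ => s ^ n / (n ! : ℝ)) :=
  Real.summable_pow_div_factorial s

lemma summable_tail (c : ℕ) (s : ℝ) :
    Summable (fun j : ℕ => s ^ (2 * j + c) / ((2 * j + c)! : ℝ)) :=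
  (summable_exp_ser s).comp_injective (fun a b h => by omega)

lemma tail_le_exp (c : ℕ) {s : ℝ} (hs : 0 ≤ s) :
    (∑' j : ℕ, s ^ (2 * j + c) / ((2 * j + c)! : ℝ)) ≤ Real.exp s := by
  rw [exp_tsum]
  exact Summable.tsum_le_tsum_of_inj (fun j => 2 * j + c) (fun a b h => by dsimp only at h; omega)
    (fun n _ => by positivity) (fun j => le_refl _) (summable_tail c s)
    (summable_exp_ser s)

lemma pow_le_exp (k : ℕ) {s : ℝ} (hs : 0 ≤ s) : s ^ k ≤ (k ! : ℝ) * Real.exp s := by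
  have h1 : s ^ k / (k ! : ℝ) ≤ Real.exp s := by
    rw [exp_tsum]
    exact Summable.le_tsum (summable_exp_ser s) k (fun i _ => by positivity)
  have h2 : (0:ℝ) < (k ! : ℝ) := by exact_mod_cast Nat.factorial_pos k
  calc s ^ k = s ^ k / (k ! : ℝ) * (k ! : ℝ) := by field_simp
    _ ≤ Real.exp s * (k ! : ℝ) := mul_le_mul_of_nonneg_right h1 (le_of_lt h2)
    _ = (k ! : ℝ) * Real.exp s := by ring

lemma tail_close (c : ℕ) {s : ℝ} (hs : 1 ≤ s) :
    |(∑' j : ℕ, s ^ (2 * j + c) / ((2 * j + c)! : ℝ)) - Real.exp s / 2|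
      ≤ ((c : ℝ) + 1) * s ^ c := by
  have hs0 : (0:ℝ) ≤ s := by linarith
  have hsc : (1:ℝ) ≤ s ^ c := by
    calc (1:ℝ) = 1 ^ c := (one_pow c).symm
      _ ≤ s ^ c := pow_le_pow_left₀ (by norm_num) hs c
  have hexp : Real.exp (-s) ≤ 1 := Real.exp_le_one_iff.mpr (by linarith)
  have hexp0 : 0 < Real.exp (-s) := Real.exp_pos _
  rcases Nat.even_or_odd c with ⟨a, ha⟩ | ⟨a, ha⟩
  · -- c = a + a
    subst ha
    have hf : Summable (fun j : ℕ => s ^ (2 * j) / ((2 * j)! : ℝ)) := by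
      simpa using summable_tail 0 s
    have h1 : (∑' j : ℕ, s ^ (2 * j + (a + a)) / ((2 * j + (a + a))! : ℝ))
        = ∑' j : ℕ, s ^ (2 * (j + a)) / ((2 * (j + a))! : ℝ) := by
      refine tsum_congr fun j => ?_
      have : 2 * j + (a + a) = 2 * (j + a) := by ring
      rw [this]
    have h2 := Summable.sum_add_tsum_nat_add (f := fun j : ℕ => s ^ (2 * j) / ((2 * j)! : ℝ)) a hf
    have h3 : (∑' j : ℕ, s ^ (2 * (j + a)) / ((2 * (j + a))! : ℝ))
        = Real.cosh s - ∑ i ∈ Finset.range a, s ^ (2 * i) / ((2 * i)! : ℝ) := by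
      have hc := Real.cosh_eq_tsum s
      linarith [h2, hc]
    rw [h1, h3]
    have hfin : 0 ≤ ∑ i ∈ Finset.range a, s ^ (2 * i) / ((2 * i)! : ℝ) :=
      Finset.sum_nonneg fun i _ => by positivity
    have hfin2 : ∑ i ∈ Finset.range a, s ^ (2 * i) / ((2 * i)! : ℝ) ≤ (a : ℝ) * s ^ (a + a) := by
      calc ∑ i ∈ Finset.range a, s ^ (2 * i) / ((2 * i)! : ℝ)
          ≤ ∑ i ∈ Finset.range a, s ^ (a + a) := by
            refine Finset.sum_le_sum fun i hi => ?_
            rw [Finset.mem_range] at hi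
            have hd : (1:ℝ) ≤ ((2 * i)! : ℝ) := by exact_mod_cast Nat.one_le_iff_ne_zero.mpr (Nat.factorial_pos _).ne'
            calc s ^ (2 * i) / ((2 * i)! : ℝ) ≤ s ^ (2 * i) := by
                  apply div_le_self (by positivity) hd
              _ ≤ s ^ (a + a) := pow_le_pow_right₀ hs (by omega)
        _ = (a : ℝ) * s ^ (a + a) := by
            rw [Finset.sum_const, Finset.card_range, nsmul_eq_mul]
    have hch : Real.cosh s - Real.exp s / 2 = Real.exp (-s) / 2 := by
      rw [Real.cosh_eq]; ring
    have hab : |Real.cosh s - ∑ i ∈ Finset.range a, s ^ (2 * i) / ((2 * i)! : ℝ) - Real.exp s / 2|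
        ≤ Real.exp (-s) / 2 + (a:ℝ) * s ^ (a + a) := by
      rw [abs_le]
      constructor <;> nlinarith [hch]
    refine hab.trans ?_
    have hac : (a : ℝ) ≤ ((a:ℕ) + a : ℕ) := by push_cast; linarith [Nat.cast_nonneg (α := ℝ) a]
    push_cast
    nlinarith [hsc]
  · -- c = 2a+1
    subst ha
    have hf : Summable (fun j : ℕ => s ^ (2 * j + 1) / ((2 * j + 1)! : ℝ)) := by
      simpa using summable_tail 1 s
    have h1 : (∑' j : ℕ, s ^ (2 * j + (2 * a + 1)) / ((2 * j + (2 * a + 1))! : ℝ))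
        = ∑' j : ℕ, s ^ (2 * (j + a) + 1) / ((2 * (j + a) + 1)! : ℝ) := by
      refine tsum_congr fun j => ?_
      have : 2 * j + (2 * a + 1) = 2 * (j + a) + 1 := by ring
      rw [this]
    have h2 := Summable.sum_add_tsum_nat_add (f := fun j : ℕ => s ^ (2 * j + 1) / ((2 * j + 1)! : ℝ)) a hf
    have h3 : (∑' j : ℕ, s ^ (2 * (j + a) + 1) / ((2 * (j + a) + 1)! : ℝ))
        = Real.sinh s - ∑ i ∈ Finset.range a, s ^ (2 * i + 1) / ((2 * i + 1)! : ℝ) := by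
      have hc := Real.sinh_eq_tsum s
      linarith [h2, hc]
    rw [h1, h3]
    have hfin : 0 ≤ ∑ i ∈ Finset.range a, s ^ (2 * i + 1) / ((2 * i + 1)! : ℝ) :=
      Finset.sum_nonneg fun i _ => by positivity
    have hfin2 : ∑ i ∈ Finset.range a, s ^ (2 * i + 1) / ((2 * i + 1)! : ℝ)
        ≤ (a : ℝ) * s ^ (2 * a + 1) := by
      calc ∑ i ∈ Finset.range a, s ^ (2 * i + 1) / ((2 * i + 1)! : ℝ)
          ≤ ∑ i ∈ Finset.range a, s ^ (2 * a + 1) := by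
            refine Finset.sum_le_sum fun i hi => ?_
            rw [Finset.mem_range] at hi
            have hd : (1:ℝ) ≤ ((2 * i + 1)! : ℝ) := by exact_mod_cast Nat.one_le_iff_ne_zero.mpr (Nat.factorial_pos _).ne'
            calc s ^ (2 * i + 1) / ((2 * i + 1)! : ℝ) ≤ s ^ (2 * i + 1) := by
                  apply div_le_self (by positivity) hd
              _ ≤ s ^ (2 * a + 1) := pow_le_pow_right₀ hs (by omega)
        _ = (a : ℝ) * s ^ (2 * a + 1) := by
            rw [Finset.sum_const, Finset.card_range, nsmul_eq_mul]
    have hch : Real.sinh s - Real.exp s / 2 = -(Real.exp (-s) / 2) := by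
      rw [Real.sinh_eq]; ring
    have hab : |Real.sinh s - ∑ i ∈ Finset.range a, s ^ (2 * i + 1) / ((2 * i + 1)! : ℝ) - Real.exp s / 2|
        ≤ Real.exp (-s) / 2 + (a:ℝ) * s ^ (2 * a + 1) := by
      rw [abs_le]
      constructor <;> nlinarith [hch]
    refine hab.trans ?_
    push_cast
    nlinarith [hsc, Nat.cast_nonneg (α := ℝ) a]
end KEvenAux

open KEvenAux

set_option maxHeartbeats 2000000

/-- For each integer `ℓ ≥ 1`,
`k_ℓ(s) = (e^s/(2s^ℓ))(1 − ℓ(ℓ−1)/(2s) + O(1/s²))` as `s → ∞`; explicitly, there are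
`C > 0`, `s₀ > 0` with
`|k_ℓ(s) − (e^s/(2s^ℓ))(1 − ℓ(ℓ−1)/(2s))| ≤ C e^s s^{-ℓ-2}` for all `s ≥ s₀`. -/
theorem kEven_asymptotic (ℓ : ℕ) (hℓ : 1 ≤ ℓ) :
    ∃ C > (0 : ℝ), ∃ s₀ > (0 : ℝ), ∀ s : ℝ, s₀ ≤ s →
      |kEven ℓ s - (exp s / (2 * s ^ ℓ)) * (1 - (ℓ : ℝ) * ((ℓ : ℝ) - 1) / (2 * s))|
        ≤ C * exp s * s ^ (-(ℓ : ℝ) - 2) := by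
  obtain ⟨D, hD, hDb⟩ := poly_bound ℓ hℓ
  have hℓ1 : (1:ℝ) ≤ (ℓ:ℝ) := by exact_mod_cast hℓ
  set Q : ℝ := (ℓ:ℝ) * ((ℓ:ℝ) - 1) / 2 with hQdef
  have hQ0 : 0 ≤ Q := by rw [hQdef]; nlinarith
  set E : ℝ := D * (((ℓ:ℝ) + 2) ^ (ℓ + 2)) with hEdef
  have hE0 : 0 < E := by rw [hEdef]; positivity
  set A : ℝ := ((ℓ:ℝ) + 2) + Q * ((ℓ:ℝ) + 3) with hAdef
  have hA0 : 0 ≤ A := by rw [hAdef]; nlinarith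
  set C : ℝ := A * (((ℓ+3)! : ℕ) : ℝ) + E + 1 with hCdef
  have hfacpos : (0:ℝ) < (((ℓ+3)! : ℕ) : ℝ) := by exact_mod_cast Nat.factorial_pos (ℓ+3)
  have hC0 : 0 < C := by rw [hCdef]; nlinarith
  refine ⟨C, hC0, 1, one_pos, fun s hs => ?_⟩
  have hs0 : (0:ℝ) < s := lt_of_lt_of_le one_pos hs
  -- sequences
  set F : ℕ → ℝ := fun j => s ^ (2 * j + 1) / (((2 * (j + ℓ))‼ : ℝ) * (((2 * j + 1)‼ : ℝ))) with hFdef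
  set B : ℕ → ℝ := fun j => s ^ (2 * j + 1) / ((2 * j + 1 + ℓ)! : ℝ) with hBdef
  set Cc : ℕ → ℝ := fun j => s ^ (2 * j + 1) / ((2 * j + 2 + ℓ)! : ℝ) with hCcdef
  set R : ℕ → ℝ := fun j => F j - B j + Q * Cc j with hRdef
  have hfacpos' : ∀ n : ℕ, (0:ℝ) < ((n)! : ℕ) := fun n => by exact_mod_cast Nat.factorial_pos n
  -- pointwise forms
  have hFj : ∀ j, F j = s ^ (2 * j + 1) / ((2 * j + 1)! : ℝ) * (1 / uF ℓ (2 * j + 1)) := by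
    intro j
    rw [hFdef]
    dsimp only
    rw [dfac_eq_real ℓ j, mul_one_div, div_div]
  have hBj : ∀ j, B j = s ^ (2 * j + 1) / ((2 * j + 1)! : ℝ) * (1 / vF ℓ (2 * j + 1)) := by
    intro j
    rw [hBdef]
    dsimp only
    rw [factorial_eq ℓ (2 * j + 1), mul_one_div, div_div]
  have hCcj : ∀ j, Cc j = s ^ (2 * j + 1) / ((2 * j + 1)! : ℝ) * (1 / vF (ℓ+1) (2 * j + 1)) := by
    intro j
    rw [hCcdef]
    dsimp only
    have h : 2 * j + 2 + ℓ = (2 * j + 1) + (ℓ + 1) := by omega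
    rw [h, factorial_eq (ℓ+1) (2 * j + 1), mul_one_div, div_div]
  have hRj : ∀ j, R j = s ^ (2 * j + 1) / ((2 * j + 1)! : ℝ)
      * (1 / uF ℓ (2 * j + 1) - 1 / vF ℓ (2 * j + 1) + Q / vF (ℓ+1) (2 * j + 1)) := by
    intro j
    rw [hRdef]
    dsimp only
    rw [hFj j, hBj j, hCcj j]
    ring
  -- summability
  have hsum1 : Summable (fun j : ℕ => s ^ (2 * j + 1) / ((2 * j + 1)! : ℝ)) := summable_tail 1 s
  have hFs : Summable F := by
    refine Summable.of_nonneg_of_le (fun j => ?_) (fun j => ?_) hsum1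
    · rw [hFj j]
      have := uF_pos ℓ (2 * j + 1)
      positivity
    · rw [hFj j]
      have hu1 : (1:ℝ) ≤ uF ℓ (2 * j + 1) := by
        refine le_trans ?_ (pow_le_uF ℓ (2 * j + 1))
        calc (1:ℝ) = 1 ^ ℓ := (one_pow ℓ).symm
          _ ≤ (((2*j+1 : ℕ):ℝ) + 1) ^ ℓ := by
              apply pow_le_pow_left₀ (by norm_num)
              have : (0:ℝ) ≤ ((2*j+1 : ℕ):ℝ) := Nat.cast_nonneg _
              linarith
      calc s ^ (2 * j + 1) / ((2 * j + 1)! : ℝ) * (1 / uF ℓ (2 * j + 1))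
          ≤ s ^ (2 * j + 1) / ((2 * j + 1)! : ℝ) * 1 := by
            refine mul_le_mul_of_nonneg_left ?_ (by positivity)
            rw [div_le_one (uF_pos ℓ _)] at *
            · exact hu1
          _ = s ^ (2 * j + 1) / ((2 * j + 1)! : ℝ) := mul_one _
  have hBs : Summable B := by
    refine Summable.of_nonneg_of_le (fun j => by rw [hBdef]; positivity) (fun j => ?_) hsum1
    rw [hBdef]
    dsimp only
    apply div_le_div_of_nonneg_left (by positivity) (hfacpos' _)
    exact_mod_cast Nat.factorial_le (by omega)
  have hCs : Summable Cc := by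
    refine Summable.of_nonneg_of_le (fun j => by rw [hCcdef]; positivity) (fun j => ?_) hsum1
    rw [hCcdef]
    dsimp only
    apply div_le_div_of_nonneg_left (by positivity) (hfacpos' _)
    exact_mod_cast Nat.factorial_le (by omega)
  have hRs : Summable R := by
    rw [hRdef]
    exact (hFs.sub hBs).add (hCs.mul_left Q)
  -- tsum split
  have hkE : kEven ℓ s = (∑' j, B j) - Q * (∑' j, Cc j) + ∑' j, R j := by
    have h1 : kEven ℓ s = ∑' j, F j := rfl
    rw [h1]
    have h2 : ∀ j, F j = (B j - Q * Cc j) + R j := by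
      intro j; rw [hRdef]; dsimp only; ring
    calc (∑' j, F j) = ∑' j, ((B j - Q * Cc j) + R j) := tsum_congr h2
      _ = (∑' j, (B j - Q * Cc j)) + ∑' j, R j :=
          Summable.tsum_add (hBs.sub (hCs.mul_left Q)) hRs
      _ = ((∑' j, B j) - ∑' j, Q * Cc j) + ∑' j, R j := by
          rw [Summable.tsum_sub hBs (hCs.mul_left Q)]
      _ = (∑' j, B j) - Q * (∑' j, Cc j) + ∑' j, R j := by
          rw [tsum_mul_left]
  -- values of B and Cc sums
  set T1 : ℝ := ∑' j : ℕ, s ^ (2 * j + (ℓ+1)) / ((2 * j + (ℓ+1))! : ℝ) with hT1def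
  set T2 : ℝ := ∑' j : ℕ, s ^ (2 * j + (ℓ+2)) / ((2 * j + (ℓ+2))! : ℝ) with hT2def
  have hTB : (∑' j, B j) = T1 / s ^ ℓ := by
    rw [hT1def, ← tsum_div_const]
    refine tsum_congr fun j => ?_
    rw [hBdef]
    dsimp only
    have h1 : 2 * j + (ℓ+1) = (2 * j + 1) + ℓ := by omega
    rw [h1, pow_add]
    field_simp
    ring
  have hTC : (∑' j, Cc j) = T2 / s ^ (ℓ+1) := by
    rw [hT2def, ← tsum_div_const]
    refine tsum_congr fun j => ?_
    rw [hCcdef]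
    dsimp only
    have h1 : 2 * j + (ℓ+2) = (2 * j + 1) + (ℓ + 1) := by omega
    have h2 : 2 * j + 2 + ℓ = (2 * j + 1) + (ℓ + 1) := by omega
    rw [h1, h2, pow_add]
    field_simp
    ring
  -- error bound
  have hRb : ∀ j, |R j| ≤ (E / s ^ (ℓ+2)) * (s ^ (2 * j + (ℓ+3)) / ((2 * j + (ℓ+3))! : ℝ)) := by
    intro j
    rw [hRj j, abs_mul]
    have hpos : (0:ℝ) ≤ s ^ (2*j+1) / ((2*j+1)! : ℝ) := by positivity
    rw [abs_of_nonneg hpos]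
    have hg := hDb (2*j+1)
    have hfe : ((2*j+(ℓ+3))! : ℝ) = ((2*j+1)! : ℝ) * vF (ℓ+2) (2*j+1) := by
      have h : 2*j+(ℓ+3) = (2*j+1)+(ℓ+2) := by omega
      rw [h]; exact factorial_eq (ℓ+2) (2*j+1)
    have hpe : s ^ (2*j+(ℓ+3)) = s ^ (2*j+1) * s^(ℓ+2) := by
      rw [← pow_add]; congr 1; omega
    have hvpos := vF_pos (ℓ+2) (2*j+1)
    have hrhs : (E / s^(ℓ+2)) * (s ^ (2*j+(ℓ+3)) / ((2*j+(ℓ+3))! : ℝ))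
        = E * s ^ (2*j+1) / (((2*j+1)! : ℝ) * vF (ℓ+2) (2*j+1)) := by
      rw [hfe, hpe]
      have h1 : ((2*j+1)! : ℝ) ≠ 0 := (hfacpos' _).ne'
      have h2 : vF (ℓ+2) (2*j+1) ≠ 0 := hvpos.ne'
      have h3 : s ^ (ℓ+2) ≠ 0 := by positivity
      field_simp
    rw [hrhs]
    have hlhs : s ^ (2*j+1) / ((2*j+1)! : ℝ) * (D / ((((2*j+1):ℕ):ℝ)+1)^(ℓ+2))
        = D * s ^ (2*j+1) / (((2*j+1)! : ℝ) * ((((2*j+1):ℕ):ℝ)+1)^(ℓ+2)) := by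
      field_simp
    calc s ^ (2*j+1) / ((2*j+1)! : ℝ)
          * |1 / uF ℓ (2*j+1) - 1 / vF ℓ (2*j+1) + Q / vF (ℓ+1) (2*j+1)|
        ≤ s ^ (2*j+1) / ((2*j+1)! : ℝ) * (D / ((((2*j+1):ℕ):ℝ)+1)^(ℓ+2)) :=
          mul_le_mul_of_nonneg_left hg hpos
      _ = D * s ^ (2*j+1) / (((2*j+1)! : ℝ) * ((((2*j+1):ℕ):ℝ)+1)^(ℓ+2)) := hlhs
      _ ≤ E * s ^ (2*j+1) / (((2*j+1)! : ℝ) * vF (ℓ+2) (2*j+1)) := by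
          rw [div_le_div_iff₀ (by positivity) (by positivity)]
          have h1 : vF (ℓ+2) (2*j+1) ≤ ((ℓ:ℝ)+2)^(ℓ+2) * ((((2*j+1):ℕ):ℝ)+1)^(ℓ+2) := by
            have h := vF_le (ℓ+2) (2*j+1)
            rw [mul_pow] at h
            have hc : (((ℓ+2 : ℕ)):ℝ) = (ℓ:ℝ)+2 := by push_cast; ring
            rwa [hc] at h
          calc D * s ^ (2*j+1) * (((2*j+1)! : ℝ) * vF (ℓ+2) (2*j+1))
              = (D * s ^ (2*j+1) * ((2*j+1)! : ℝ)) * vF (ℓ+2) (2*j+1) := by ring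
            _ ≤ (D * s ^ (2*j+1) * ((2*j+1)! : ℝ))
                * (((ℓ:ℝ)+2)^(ℓ+2) * ((((2*j+1):ℕ):ℝ)+1)^(ℓ+2)) := by
                refine mul_le_mul_of_nonneg_left h1 (by positivity)
            _ = E * s ^ (2*j+1) * (((2*j+1)! : ℝ) * ((((2*j+1):ℕ):ℝ)+1)^(ℓ+2)) := by
                rw [hEdef]; ring
  have hRsum : |∑' j, R j| ≤ (E / s^(ℓ+2)) * Real.exp s := by
    have hgs : HasSum (fun j : ℕ => (E / s^(ℓ+2)) * (s ^ (2*j+(ℓ+3)) / ((2*j+(ℓ+3))! : ℝ)))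
        ((E / s^(ℓ+2)) * ∑' j : ℕ, s ^ (2*j+(ℓ+3)) / ((2*j+(ℓ+3))! : ℝ)) :=
      (summable_tail (ℓ+3) s).hasSum.mul_left _
    have h := tsum_of_norm_bounded hgs (fun j => by rw [Real.norm_eq_abs]; exact hRb j)
    rw [Real.norm_eq_abs] at h
    refine h.trans ?_
    exact mul_le_mul_of_nonneg_left (tail_le_exp (ℓ+3) hs0.le) (by positivity)
  -- tail bounds
  have hT1b : |T1 - Real.exp s / 2| ≤ ((ℓ:ℝ)+2) * s ^ (ℓ+1) := by
    have h := tail_close (ℓ+1) hs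
    rw [hT1def]
    refine h.trans ?_
    have : ((((ℓ+1):ℕ)):ℝ) + 1 = (ℓ:ℝ)+2 := by push_cast; ring
    rw [this]
  have hT2b : |T2 - Real.exp s / 2| ≤ ((ℓ:ℝ)+3) * s ^ (ℓ+2) := by
    have h := tail_close (ℓ+2) hs
    rw [hT2def]
    refine h.trans ?_
    have : ((((ℓ+2):ℕ)):ℝ) + 1 = (ℓ:ℝ)+3 := by push_cast; ring
    rw [this]
  -- difference identity
  have hdiff : kEven ℓ s - (Real.exp s / (2 * s ^ ℓ)) * (1 - (ℓ:ℝ) * ((ℓ:ℝ) - 1) / (2 * s))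
      = (T1 - Real.exp s / 2) / s ^ ℓ - Q * ((T2 - Real.exp s / 2) / s ^ (ℓ+1)) + ∑' j, R j := by
    rw [hkE, hTB, hTC, hQdef]
    have hsl : s ^ ℓ ≠ 0 := by positivity
    have hsl1 : s ^ (ℓ+1) ≠ 0 := by positivity
    field_simp
    ring
  rw [hdiff]
  -- triangle inequality
  have habs : |(T1 - Real.exp s / 2) / s ^ ℓ - Q * ((T2 - Real.exp s / 2) / s ^ (ℓ+1)) + ∑' j, R j|
      ≤ |T1 - Real.exp s / 2| / s ^ ℓ + Q * (|T2 - Real.exp s / 2| / s ^ (ℓ+1)) + |∑' j, R j| := by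
    have h1 : |(T1 - Real.exp s / 2) / s ^ ℓ| = |T1 - Real.exp s / 2| / s ^ ℓ := by
      rw [abs_div, abs_of_pos (show (0:ℝ) < s ^ ℓ by positivity)]
    have h2 : |Q * ((T2 - Real.exp s / 2) / s ^ (ℓ+1))|
        = Q * (|T2 - Real.exp s / 2| / s ^ (ℓ+1)) := by
      rw [abs_mul, abs_of_nonneg hQ0, abs_div,
        abs_of_pos (show (0:ℝ) < s ^ (ℓ+1) by positivity)]
    calc |(T1 - Real.exp s / 2) / s ^ ℓ - Q * ((T2 - Real.exp s / 2) / s ^ (ℓ+1)) + ∑' j, R j|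
        ≤ |(T1 - Real.exp s / 2) / s ^ ℓ - Q * ((T2 - Real.exp s / 2) / s ^ (ℓ+1))| + |∑' j, R j| :=
          abs_add_le _ _
      _ ≤ |(T1 - Real.exp s / 2) / s ^ ℓ| + |Q * ((T2 - Real.exp s / 2) / s ^ (ℓ+1))| + |∑' j, R j| := by
          have := abs_sub ((T1 - Real.exp s / 2) / s ^ ℓ)
            (Q * ((T2 - Real.exp s / 2) / s ^ (ℓ+1)))
          linarith
      _ = |T1 - Real.exp s / 2| / s ^ ℓ + Q * (|T2 - Real.exp s / 2| / s ^ (ℓ+1)) + |∑' j, R j| := by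
          rw [h1, h2]
  -- bounds on the first two terms
  have hb1 : |T1 - Real.exp s / 2| / s ^ ℓ ≤ ((ℓ:ℝ)+2) * s := by
    rw [div_le_iff₀ (show (0:ℝ) < s ^ ℓ by positivity)]
    calc |T1 - Real.exp s / 2| ≤ ((ℓ:ℝ)+2) * s ^ (ℓ+1) := hT1b
      _ = ((ℓ:ℝ)+2) * s * s ^ ℓ := by rw [pow_succ]; ring
  have hb2 : Q * (|T2 - Real.exp s / 2| / s ^ (ℓ+1)) ≤ Q * (((ℓ:ℝ)+3) * s) := by
    refine mul_le_mul_of_nonneg_left ?_ hQ0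
    rw [div_le_iff₀ (show (0:ℝ) < s ^ (ℓ+1) by positivity)]
    calc |T2 - Real.exp s / 2| ≤ ((ℓ:ℝ)+3) * s ^ (ℓ+2) := hT2b
      _ = ((ℓ:ℝ)+3) * s * s ^ (ℓ+1) := by rw [pow_succ]; ring
  -- rewrite the rpow
  have hrpow : s ^ (-(ℓ:ℝ) - 2) = (s ^ (ℓ+2))⁻¹ := by
    have h : (-(ℓ:ℝ) - 2) = -(((ℓ+2 : ℕ)) : ℝ) := by push_cast; ring
    rw [h, Real.rpow_neg hs0.le, Real.rpow_natCast]
  rw [hrpow]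
  -- final numeric bound
  have hsp : (0:ℝ) < s ^ (ℓ+2) := by positivity
  have hfinal : ((ℓ:ℝ)+2) * s + Q * (((ℓ:ℝ)+3) * s) + (E / s^(ℓ+2)) * Real.exp s
      ≤ C * Real.exp s * (s ^ (ℓ+2))⁻¹ := by
    have hmi : C * Real.exp s * (s ^ (ℓ+2))⁻¹ = C * Real.exp s / s ^ (ℓ+2) := by
      rw [div_eq_mul_inv]
    rw [hmi, le_div_iff₀ hsp]
    have hexpand : (((ℓ:ℝ)+2) * s + Q * (((ℓ:ℝ)+3) * s) + (E / s^(ℓ+2)) * Real.exp s) * s ^ (ℓ+2)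
        = A * s ^ (ℓ+3) + E * Real.exp s := by
      rw [hAdef]
      field_simp
      ring
    rw [hexpand]
    have hpow : s ^ (ℓ+3) ≤ (((ℓ+3)! : ℕ) : ℝ) * Real.exp s := pow_le_exp (ℓ+3) hs0.le
    have hep := Real.exp_pos s
    calc A * s ^ (ℓ+3) + E * Real.exp s
        ≤ A * ((((ℓ+3)! : ℕ) : ℝ) * Real.exp s) + E * Real.exp s :=
          add_le_add_left (mul_le_mul_of_nonneg_left hpow hA0) _
      _ ≤ C * Real.exp s := by
          have hh : (A * (((ℓ+3)! : ℕ) : ℝ) + E + 1) * Real.exp s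
              = A * ((((ℓ+3)! : ℕ) : ℝ) * Real.exp s) + E * Real.exp s + Real.exp s := by ring
          rw [hCdef, hh]
          linarith
  calc |(T1 - Real.exp s / 2) / s ^ ℓ - Q * ((T2 - Real.exp s / 2) / s ^ (ℓ+1)) + ∑' j, R j|
      ≤ |T1 - Real.exp s / 2| / s ^ ℓ + Q * (|T2 - Real.exp s / 2| / s ^ (ℓ+1)) + |∑' j, R j| := habs
    _ ≤ ((ℓ:ℝ)+2) * s + Q * (((ℓ:ℝ)+3) * s) + (E / s^(ℓ+2)) * Real.exp s := by
        linarith [hb1, hb2, hRsum]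
    _ ≤ C * Real.exp s * (s ^ (ℓ+2))⁻¹ := hfinal
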